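/- If a matrix h ∈ GL(3,ℤ) has finite order n, then n ≤ 6. Consequently, any subgroup of GL(3,ℤ) all of whose elements have finite order is a finite group. -/

import Mathlib

open Polynomial


lemma dvd12_cases {d : ℕ} (h : d ∣ 12) :
    d = 1 ∨ d = 2 ∨ d = 3 ∨ d = 4 ∨ d = 6 ∨ d = 12 := by
  have hle : d ≤ 12 := Nat.le_of_dvd (by norm_num) h
  interval_cases d <;> revert h <;> decide

lemma totient_le_three {d : ℕ} (hd : 0 < d) (h : d.totient ≤ 3) : d ∣ 12 ∧ d ≠ 12 := by
  constructor
  · rw [← Nat.factorization_le_iff_dvd hd.ne' (by norm_num)]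
    intro p
    rcases em (p.Prime) with hp | hp
    · rcases em (p ∣ d) with hpd | hpd
      · have h1 : p.totient ∣ d.totient := Nat.totient_dvd_of_dvd hpd
        have h2 : p.totient ≤ d.totient :=
          Nat.le_of_dvd (Nat.totient_pos.2 hd) h1
        rw [Nat.totient_prime hp] at h2
        have hple : p ≤ 4 := by omega
        have hp2 := hp.two_le
        interval_cases p
        · -- p = 2
          have hf : d.factorization 2 ≤ 2 := by
            by_contra hcon
            have h8 : (2:ℕ)^3 ∣ d :=
              (Nat.Prime.pow_dvd_iff_le_factorization Nat.prime_two hd.ne').2 (by omega)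
            have hle8 := Nat.le_of_dvd (Nat.totient_pos.2 hd) (Nat.totient_dvd_of_dvd h8)
            have : Nat.totient (2^3) = 4 := by decide
            omega
          have h12 : 2 ≤ (Nat.factorization 12) 2 :=
            (Nat.Prime.pow_dvd_iff_le_factorization Nat.prime_two (by norm_num)).1 (by norm_num)
          omega
        · -- p = 3
          have hf : d.factorization 3 ≤ 1 := by
            by_contra hcon
            have h9 : (3:ℕ)^2 ∣ d :=
              (Nat.Prime.pow_dvd_iff_le_factorization Nat.prime_three hd.ne').2 (by omega)
            have hle9 := Nat.le_of_dvd (Nat.totient_pos.2 hd) (Nat.totient_dvd_of_dvd h9)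
            have : Nat.totient (3^2) = 6 := by decide
            omega
          have h12 : 1 ≤ (Nat.factorization 12) 3 :=
            (Nat.Prime.pow_dvd_iff_le_factorization Nat.prime_three (by norm_num)).1 (by norm_num)
          omega
        · exact absurd hp (by decide)
      · simp [Nat.factorization_eq_zero_of_not_dvd hpd]
    · simp [Nat.factorization_eq_zero_of_not_prime _ hp]
  · rintro rfl
    revert h; decide


noncomputable section

abbrev GL3 := Matrix.GeneralLinearGroup (Fin 3) ℤ

lemma part1 (h : GL3) (hfin : IsOfFinOrder h) : orderOf h ≤ 6 := by
  classical
  set n := orderOf h with hn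
  have hnpos : 0 < n := hfin.orderOf_pos
  -- the rational matrix
  set φR : Matrix (Fin 3) (Fin 3) ℤ →+* Matrix (Fin 3) (Fin 3) ℚ :=
    (Int.castRingHom ℚ).mapMatrix with hφR
  set A : Matrix (Fin 3) (Fin 3) ℚ := φR (h : Matrix (Fin 3) (Fin 3) ℤ) with hA
  have hiff : ∀ k : ℕ, A ^ k = 1 ↔ h ^ k = 1 := by
    intro k
    constructor
    · intro hk
      have : φR (((h : Matrix (Fin 3) (Fin 3) ℤ)) ^ k) = φR 1 := by
        rw [map_pow, map_one]; exact hk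
      have hinj : Function.Injective φR := by
        intro x y hxy
        ext i j
        have := congrArg (fun M => M i j) hxy
        simpa [φR] using this
      have h2 : ((h : Matrix (Fin 3) (Fin 3) ℤ)) ^ k = 1 := hinj this
      ext1
      rw [Units.val_pow_eq_pow_val, Units.val_one]
      exact h2
    · intro hk
      have : ((h ^ k : GL3) : Matrix (Fin 3) (Fin 3) ℤ) = 1 := by rw [hk]; rfl
      rw [Units.val_pow_eq_pow_val] at this
      rw [hA, ← map_pow, this, map_one]
  have hAn : A ^ n = 1 := (hiff n).2 (pow_orderOf_eq_one h)
  set P : ℚ[X] := minpoly ℚ A with hP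
  have hint : IsIntegral ℚ A := Matrix.isIntegral A
  have hPne : P ≠ 0 := minpoly.ne_zero hint
  have hPdeg : P.natDegree ≤ 3 := by
    have h1 : P ∣ A.charpoly := Matrix.minpoly_dvd_charpoly A
    have h2 : A.charpoly.natDegree = 3 := by
      rw [Matrix.charpoly_natDegree_eq_dim]; simp
    have h3 : A.charpoly ≠ 0 := A.charpoly_monic.ne_zero
    calc P.natDegree ≤ A.charpoly.natDegree := natDegree_le_of_dvd h1 h3
    _ = 3 := h2
  -- key: P ∣ X^k - 1 → n ∣ k
  have hkey : ∀ k : ℕ, P ∣ (X : ℚ[X]) ^ k - 1 → n ∣ k := by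
    intro k hdvd
    obtain ⟨Q, hQ⟩ := hdvd
    have : aeval A ((X : ℚ[X]) ^ k - 1) = 0 := by
      rw [hQ, map_mul, minpoly.aeval, zero_mul]
    have hAk : A ^ k = 1 := by
      have := this
      rw [map_sub, map_pow, aeval_X, map_one, sub_eq_zero] at this
      exact this
    exact orderOf_dvd_of_pow_eq_one ((hiff k).1 hAk)
  have hPdvd : P ∣ (X : ℚ[X]) ^ n - 1 := by
    apply minpoly.dvd
    rw [map_sub, map_pow, aeval_X, map_one, sub_eq_zero]
    exact hAn
  -- the set S of cyclotomic indices
  set S : Finset ℕ := (Nat.divisors n).filter (fun d => cyclotomic d ℚ ∣ P) with hS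
  have hSpos : ∀ d ∈ S, 0 < d := fun d hd =>
    Nat.pos_of_mem_divisors (Finset.mem_filter.1 hd).1
  have hStot : ∀ d ∈ S, d.totient ≤ 3 := by
    intro d hd
    have hdvd : cyclotomic d ℚ ∣ P := (Finset.mem_filter.1 hd).2
    have := natDegree_le_of_dvd hdvd hPne
    rw [natDegree_cyclotomic] at this
    exact this.trans hPdeg
  have hS12 : ∀ d ∈ S, d ∣ 12 ∧ d ≠ 12 := fun d hd =>
    totient_le_three (hSpos d hd) (hStot d hd)
  -- pairwise coprimality
  have hcop : ∀ d ∈ S, ∀ e, 0 < e → d ≠ e → IsCoprime (cyclotomic d ℚ) (cyclotomic e ℚ) := by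
    intro d hd e he hde
    have hdpos := hSpos d hd
    refine (cyclotomic.irreducible_rat hdpos).coprime_iff_not_dvd.2 ?_
    intro hdvd
    have hassoc := (cyclotomic.irreducible_rat hdpos).associated_of_dvd
      (cyclotomic.irreducible_rat he) hdvd
    have := eq_of_monic_of_associated (cyclotomic.monic d ℚ) (cyclotomic.monic e ℚ) hassoc
    exact hde (cyclotomic_injective this)
  have hpairwise : (↑S : Set ℕ).Pairwise (Function.onFun IsCoprime fun d => cyclotomic d ℚ) := by
    intro d hd e he hde
    exact hcop d hd e (hSpos e he) hde
  -- P divides the product over S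
  have hPprod : P ∣ ∏ d ∈ S, cyclotomic d ℚ := by
    have hsplit : (∏ d ∈ Nat.divisors n, cyclotomic d ℚ) =
        (∏ d ∈ S, cyclotomic d ℚ) *
          ∏ d ∈ (Nat.divisors n).filter (fun d => ¬ cyclotomic d ℚ ∣ P), cyclotomic d ℚ := by
      rw [hS]
      exact (Finset.prod_filter_mul_prod_filter_not _ _ _).symm
    have hPdvd' : P ∣ (∏ d ∈ S, cyclotomic d ℚ) *
        ∏ d ∈ (Nat.divisors n).filter (fun d => ¬ cyclotomic d ℚ ∣ P), cyclotomic d ℚ := by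
      rw [← hsplit, prod_cyclotomic_eq_X_pow_sub_one hnpos]
      exact hPdvd
    refine IsCoprime.dvd_of_dvd_mul_right ?_ hPdvd'
    apply IsCoprime.prod_right
    intro d hd
    obtain ⟨hd1, hd2⟩ := Finset.mem_filter.1 hd
    exact ((cyclotomic.irreducible_rat (Nat.pos_of_mem_divisors hd1)).coprime_iff_not_dvd.2
      hd2).symm
  -- product over subset of S divides X^k - 1 if all d ∣ k
  have hproddvd : ∀ k : ℕ, 0 < k → (∀ d ∈ S, d ∣ k) →
      (∏ d ∈ S, cyclotomic d ℚ) ∣ (X : ℚ[X]) ^ k - 1 := by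
    intro k hk hdk
    apply Finset.prod_dvd_of_coprime hpairwise
    intro d hd
    have hdpos := hSpos d hd
    have h1 : cyclotomic d ℚ ∣ (X : ℚ[X]) ^ d - 1 := by
      rw [← prod_cyclotomic_eq_X_pow_sub_one hdpos]
      exact Finset.dvd_prod_of_mem _ (Nat.mem_divisors_self d hdpos.ne')
    have h2 : ((X : ℚ[X]) ^ d - 1) ∣ (X : ℚ[X]) ^ k - 1 := by
      obtain ⟨c, hc⟩ := hdk d hd
      have := sub_dvd_pow_sub_pow ((X : ℚ[X]) ^ d) 1 c
      rwa [← pow_mul, one_pow, ← hc] at this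
    exact h1.trans h2
  -- n ∣ 12
  have hn12 : n ∣ 12 := by
    apply hkey
    refine hPprod.trans (hproddvd 12 (by norm_num) ?_)
    intro d hd; exact (hS12 d hd).1
  have hcases : n ≤ 6 ∨ n = 12 := by
    rcases dvd12_cases hn12 with h|h|h|h|h|h <;> omega
  rcases hcases with hle | h12
  · exact hle
  exfalso
  -- there is d ∈ S with 4 ∣ d
  have h4 : ∃ d ∈ S, 4 ∣ d := by
    by_contra hcon
    push_neg at hcon
    have : n ∣ 6 := by
      apply hkey
      refine hPprod.trans (hproddvd 6 (by norm_num) ?_)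
      intro d hd
      rcases dvd12_cases (hS12 d hd).1 with rfl|rfl|rfl|rfl|rfl|rfl <;>
        first
          | decide
          | (exact absurd (by decide) (hcon _ hd))
          | (exact absurd (hS12 _ hd).2 (by decide))
    rw [h12] at this
    norm_num at this
  have h3 : ∃ d ∈ S, 3 ∣ d := by
    by_contra hcon
    push_neg at hcon
    have : n ∣ 4 := by
      apply hkey
      refine hPprod.trans (hproddvd 4 (by norm_num) ?_)
      intro d hd
      rcases dvd12_cases (hS12 d hd).1 with rfl|rfl|rfl|rfl|rfl|rfl <;>
        first
          | decide
          | (exact absurd (by decide) (hcon _ hd))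
          | (exact absurd (hS12 _ hd).2 (by decide))
    rw [h12] at this
    norm_num at this
  obtain ⟨d, hdS, hd4⟩ := h4
  obtain ⟨e, heS, he3⟩ := h3
  have hd' : d = 4 := by
    rcases dvd12_cases (hS12 d hdS).1 with rfl|rfl|rfl|rfl|rfl|rfl <;>
      first | rfl | omega | (exact absurd (hS12 _ hdS).2 (by norm_num))
  have he' : e = 3 ∨ e = 6 := by
    rcases dvd12_cases (hS12 e heS).1 with rfl|rfl|rfl|rfl|rfl|rfl <;>
      first | omega | (exact absurd (hS12 _ heS).2 (by norm_num))
  have hde : d ≠ e := by omega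
  -- Φ_d * Φ_e ∣ P, degree 4 > 3
  have hmul : cyclotomic d ℚ * cyclotomic e ℚ ∣ P := by
    apply IsCoprime.mul_dvd (hcop d hdS e (hSpos e heS) hde)
      (Finset.mem_filter.1 hdS).2 (Finset.mem_filter.1 heS).2
  have hdegmul : (cyclotomic d ℚ * cyclotomic e ℚ).natDegree = 4 := by
    rw [natDegree_mul ((cyclotomic.monic d ℚ).ne_zero) ((cyclotomic.monic e ℚ).ne_zero),
      natDegree_cyclotomic, natDegree_cyclotomic]
    subst hd'
    rcases he' with rfl | rfl <;> decide
  have := natDegree_le_of_dvd hmul hPne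
  omega

end


open Finset

lemma pow_entry_dvd (C : Matrix (Fin 3) (Fin 3) ℤ) (m : ℕ)
    (hC : ∀ i j, (3:ℤ)^m ∣ C i j) :
    ∀ k i j, (3:ℤ)^(m*k) ∣ (C^k) i j := by
  intro k
  induction k with
  | zero => intro i j; simp
  | succ k ih =>
    intro i j
    rw [pow_succ, Matrix.mul_apply]
    apply Finset.dvd_sum
    intro l _
    rw [Nat.mul_succ, pow_add]
    exact mul_dvd_mul (ih i l) (hC l j)

/-- Minkowski: a `3×3` integer matrix of prime order congruent to `1` mod `3` is `1`. -/
lemma minkowski_prime (p : ℕ) (hp : p.Prime) (A : Matrix (Fin 3) (Fin 3) ℤ)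
    (hA : A ^ p = 1) (hred : ∀ i j, (3:ℤ) ∣ (A - 1) i j) (hne : A ≠ 1) : False := by
  classical
  set C : Matrix (Fin 3) (Fin 3) ℤ := A - 1 with hCdef
  have hCne : C ≠ 0 := sub_ne_zero.2 hne
  obtain ⟨i0, hi0⟩ : ∃ i, C i ≠ 0 := Function.ne_iff.1 hCne
  obtain ⟨j0, hj0⟩ : ∃ j, C i0 j ≠ 0 := Function.ne_iff.1 hi0
  set b : ℕ := (C i0 j0).natAbs with hb
  have hbpos : 0 < b := Int.natAbs_pos.2 hj0
  set Pred : ℕ → Prop := fun e => ∀ i j, (3:ℤ)^e ∣ C i j with hPreddef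
  have hP1 : Pred 1 := by intro i j; simpa using hred i j
  have hbound : ∀ e, Pred e → e ≤ b := by
    intro e he
    have h1 : ((3:ℤ)^e).natAbs ∣ b := Int.natAbs_dvd_natAbs.2 (he i0 j0)
    have h2 : (3:ℕ)^e ≤ b := by
      apply Nat.le_of_dvd hbpos
      simpa [Int.natAbs_pow] using h1
    have : e < 3 ^ e := Nat.lt_pow_self (by norm_num : 1 < 3)
    omega
  set m : ℕ := Nat.findGreatest Pred b with hmdef
  have hm1 : 1 ≤ m := Nat.le_findGreatest hbpos hP1
  have hPm : Pred m := Nat.findGreatest_spec hbpos hP1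
  have hnot : ¬ Pred (m+1) := by
    intro hcon
    have := Nat.le_findGreatest (hbound _ hcon) hcon
    omega
  set D : Matrix (Fin 3) (Fin 3) ℤ := Matrix.of fun i j => C i j / 3^m with hDdef
  have hCD : ∀ i j, C i j = 3^m * D i j := fun i j =>
    (Int.mul_ediv_cancel' (hPm i j)).symm
  obtain ⟨i1, j1, hD⟩ : ∃ i j, ¬ (3:ℤ) ∣ D i j := by
    by_contra hcon
    push_neg at hcon
    apply hnot
    intro i j
    rw [hCD i j, pow_succ]
    exact mul_dvd_mul_left _ (hcon i j)
  have hpowC : ∀ k i j, (3:ℤ)^(m*k) ∣ (C^k) i j := pow_entry_dvd C m hPm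
  -- binomial expansion, entrywise
  have hq2 := hp.two_le
  obtain ⟨q, hqe⟩ : ∃ q, p = 2 + q := ⟨p - 2, by omega⟩
  have hent : ∀ i j, ((1 : Matrix (Fin 3) (Fin 3) ℤ)) i j =
      ∑ k ∈ range (p+1), (p.choose k : ℤ) * (C^k) i j := by
    intro i j
    have hAC : A = C + 1 := by rw [hCdef]; abel
    calc (1 : Matrix (Fin 3) (Fin 3) ℤ) i j = ((C + 1) ^ p) i j := by rw [← hAC, hA]
    _ = ∑ k ∈ range (p+1), (p.choose k : ℤ) * (C^k) i j := by
        rw [Commute.add_pow (Commute.one_right C) p, Matrix.sum_apply]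
        apply Finset.sum_congr rfl
        intro k _
        rw [one_pow, mul_one]
        have h1 : (↑(p.choose k) : Matrix (Fin 3) (Fin 3) ℤ)
            = (p.choose k : ℕ) • (1 : Matrix (Fin 3) (Fin 3) ℤ) := by simp
        rw [h1, mul_smul_comm, mul_one, Matrix.smul_apply]
        simp [mul_comm]
  have hEq : ∀ i j, (p:ℤ) * C i j
      + ∑ k ∈ range (1+q), (p.choose (k+2) : ℤ) * (C^(k+2)) i j = 0 := by
    intro i j
    have h := hent i j
    subst hqe
    rw [show 2 + q + 1 = (1 + q) + 1 + 1 by omega] at h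
    rw [Finset.sum_range_succ' _ ((1+q)+1), Finset.sum_range_succ' _ (1+q)] at h
    simp only [zero_add, Nat.choose_zero_right, Nat.cast_one, pow_zero, one_mul,
      Nat.choose_one_right, pow_one] at h
    have hconv : ∀ k : ℕ, k + 1 + 1 = k + 2 := fun k => by omega
    simp only [hconv] at h
    linarith [h]
  -- now split on p = 3
  rcases eq_or_ne p 3 with hp3 | hp3
  · -- p = 3 : q = 1
    subst hp3
    have hq1 : q = 1 := by omega
    subst hq1
    have h := hEq i1 j1
    rw [Finset.sum_range_succ, Finset.sum_range_one] at h
    norm_num at h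
    -- h : 3 * C i1 j1 + (3 * (C^2) i1 j1 + (C^3) i1 j1) = 0
    have hd2 : (3:ℤ)^(m+2) ∣ 3 * (C^2) i1 j1 := by
      have := hpowC 2 i1 j1
      have hdd : (3:ℤ)^(m+2) ∣ 3 * (3:ℤ)^(m*2) := by
        rw [← pow_succ']
        exact pow_dvd_pow 3 (by omega)
      exact hdd.trans (mul_dvd_mul_left 3 this)
    have hd3 : (3:ℤ)^(m+2) ∣ (C^3) i1 j1 := by
      refine (pow_dvd_pow (3:ℤ) (by omega : m+2 ≤ m*3)).trans (hpowC 3 i1 j1)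
    have hdC : (3:ℤ)^(m+2) ∣ 3 * C i1 j1 := by
      have : 3 * C i1 j1 = -(3 * (C^2) i1 j1 + (C^3) i1 j1) := by linarith [h]
      rw [this]
      exact dvd_neg.2 (dvd_add hd2 hd3)
    rw [hCD i1 j1] at hdC
    have hcancel : (3:ℤ) ∣ D i1 j1 := by
      have h1 : (3:ℤ)^(m+1) * 3 ∣ (3:ℤ)^(m+1) * D i1 j1 := by
        have e1 : (3:ℤ)^(m+1) * 3 = 3^(m+2) := by ring
        have e2 : (3:ℤ) * (3^m * D i1 j1) = 3^(m+1) * D i1 j1 := by ring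
        rw [e1, ← e2]
        exact hdC
      exact (mul_dvd_mul_iff_left (pow_ne_zero (m+1) (by norm_num : (3:ℤ) ≠ 0))).1 h1
    exact hD hcancel
  · -- p ≠ 3
    have h := hEq i1 j1
    have hdsum : (3:ℤ)^(m+1) ∣ ∑ k ∈ range (1+q), (p.choose (k+2) : ℤ) * (C^(k+2)) i1 j1 := by
      apply Finset.dvd_sum
      intro k _
      refine Dvd.dvd.mul_left ?_ _
      refine (pow_dvd_pow (3:ℤ) ?_).trans (hpowC (k+2) i1 j1)
      nlinarith [hm1]
    have hdC : (3:ℤ)^(m+1) ∣ (p:ℤ) * C i1 j1 := by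
      have : (p:ℤ) * C i1 j1 = -(∑ k ∈ range (1+q), (p.choose (k+2) : ℤ) * (C^(k+2)) i1 j1) := by
        linarith [h]
      rw [this]
      exact dvd_neg.2 hdsum
    rw [hCD i1 j1] at hdC
    have hcancel : (3:ℤ) ∣ (p:ℤ) * D i1 j1 := by
      have h1 : (3:ℤ)^m * 3 ∣ (3:ℤ)^m * ((p:ℤ) * D i1 j1) := by
        have e1 : (3:ℤ)^m * 3 = 3^(m+1) := by ring
        have e2 : (p:ℤ) * (3^m * D i1 j1) = 3^m * ((p:ℤ) * D i1 j1) := by ring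
        rw [e1, ← e2]
        exact hdC
      exact (mul_dvd_mul_iff_left (pow_ne_zero m (by norm_num : (3:ℤ) ≠ 0))).1 h1
    rcases Int.Prime.dvd_mul' (p := 3) Nat.prime_three hcancel with h3p | h3D
    · have : (3:ℕ) ∣ p := by exact_mod_cast h3p
      exact hp3 ((Nat.prime_dvd_prime_iff_eq Nat.prime_three hp).1 this).symm
    · exact hD h3D


/-- torsion elements in the kernel of reduction mod 3 are trivial -/
lemma red_torsion_triv (g : GL3) (hg : IsOfFinOrder g)
    (hred : ∀ i j, (3:ℤ) ∣ ((g : Matrix (Fin 3) (Fin 3) ℤ) - 1) i j) : g = 1 := by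
  by_contra hne
  set n := orderOf g with hn
  have hnpos : 0 < n := hg.orderOf_pos
  have hne1 : n ≠ 1 := fun hc => hne (orderOf_eq_one_iff.1 (hn ▸ hc))
  have hn1 : 1 < n := by omega
  set p := n.minFac with hp
  have hpp : p.Prime := Nat.minFac_prime (by omega)
  have hpdvd : p ∣ n := Nat.minFac_dvd n
  set g' : GL3 := g ^ (n / p) with hg'
  have hg'p : g' ^ p = 1 := by
    rw [hg', ← pow_mul, Nat.div_mul_cancel hpdvd]
    exact pow_orderOf_eq_one g
  have hg'ne : g' ≠ 1 := by
    intro hcon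
    have hdvd : n ∣ n / p := orderOf_dvd_of_pow_eq_one (hg' ▸ hcon)
    have h1 : n / p < n := Nat.div_lt_self hnpos hpp.one_lt
    have h2 : 0 < n / p := Nat.div_pos (Nat.minFac_le hnpos) hpp.pos
    have := Nat.le_of_dvd h2 hdvd
    omega
  set ρ : Matrix (Fin 3) (Fin 3) ℤ →+* Matrix (Fin 3) (Fin 3) (ZMod 3) :=
    (Int.castRingHom (ZMod 3)).mapMatrix with hρ
  have hρg : ρ (g : Matrix (Fin 3) (Fin 3) ℤ) = 1 := by
    have h0 : ρ ((g : Matrix (Fin 3) (Fin 3) ℤ) - 1) = 0 := by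
      ext a c
      have := hred a c
      simp only [hρ, RingHom.mapMatrix_apply, Matrix.map_apply, Int.coe_castRingHom,
        Matrix.zero_apply]
      rw [ZMod.intCast_zmod_eq_zero_iff_dvd]
      exact_mod_cast this
    have h2 : ρ (g : Matrix (Fin 3) (Fin 3) ℤ) - 1 = 0 := by
      rw [← map_one ρ, ← map_sub]; exact h0
    rwa [sub_eq_zero] at h2
  apply minkowski_prime p hpp ((g' : Matrix (Fin 3) (Fin 3) ℤ))
  · rw [← Units.val_pow_eq_pow_val, hg'p, Units.val_one]
  · intro i j
    have hρg' : ρ ((g' : Matrix (Fin 3) (Fin 3) ℤ)) = 1 := by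
      rw [hg', Units.val_pow_eq_pow_val, map_pow, hρg, one_pow]
    have h0 : ρ (((g' : Matrix (Fin 3) (Fin 3) ℤ)) - 1) = 0 := by
      rw [map_sub, hρg', map_one, sub_self]
    have h3 := congrArg (fun M => M i j) h0
    simp only [hρ, RingHom.mapMatrix_apply, Matrix.map_apply, Int.coe_castRingHom,
      Matrix.zero_apply] at h3
    rw [ZMod.intCast_zmod_eq_zero_iff_dvd] at h3
    exact_mod_cast h3
  · intro hcon
    apply hg'ne
    ext1
    rw [hcon, Units.val_one]

lemma part2 (G : Subgroup GL3) (hG : ∀ g ∈ G, IsOfFinOrder g) : Finite G := by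
  classical
  set ρ : Matrix (Fin 3) (Fin 3) ℤ →+* Matrix (Fin 3) (Fin 3) (ZMod 3) :=
    (Int.castRingHom (ZMod 3)).mapMatrix with hρ
  have : Finite (Matrix (Fin 3) (Fin 3) (ZMod 3)) := by infer_instance
  apply Finite.of_injective (fun g : G => ρ ((g : GL3) : Matrix (Fin 3) (Fin 3) ℤ))
  intro g1 g2 hgg
  simp only at hgg
  have hmem : ((g1 : GL3) * (g2 : GL3)⁻¹) ∈ G := mul_mem g1.2 (inv_mem g2.2)
  have hkey : ((g1 : GL3) * (g2 : GL3)⁻¹) = 1 := by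
    apply red_torsion_triv _ (hG _ hmem)
    intro i j
    have hval : ((((g1 : GL3) * (g2 : GL3)⁻¹ : GL3)) : Matrix (Fin 3) (Fin 3) ℤ)
        = ((g1 : GL3) : Matrix (Fin 3) (Fin 3) ℤ) * (((g2 : GL3)⁻¹ : GL3) : Matrix (Fin 3) (Fin 3) ℤ) :=
      rfl
    have h1 : ρ ((((g1 : GL3) * (g2 : GL3)⁻¹ : GL3)) : Matrix (Fin 3) (Fin 3) ℤ) = 1 := by
      rw [hval, map_mul, hgg, ← map_mul]
      have : ((g2 : GL3) : Matrix (Fin 3) (Fin 3) ℤ) * (((g2 : GL3)⁻¹ : GL3) : Matrix (Fin 3) (Fin 3) ℤ)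
          = ((((g2 : GL3) * (g2 : GL3)⁻¹ : GL3)) : Matrix (Fin 3) (Fin 3) ℤ) := rfl
      rw [this, mul_inv_cancel, Units.val_one, map_one]
    have h0 : ρ (((((g1 : GL3) * (g2 : GL3)⁻¹ : GL3)) : Matrix (Fin 3) (Fin 3) ℤ) - 1) = 0 := by
      rw [map_sub, h1, map_one, sub_self]
    have h3 := congrArg (fun M => M i j) h0
    simp only [hρ, RingHom.mapMatrix_apply, Matrix.map_apply, Int.coe_castRingHom,
      Matrix.zero_apply] at h3
    rw [ZMod.intCast_zmod_eq_zero_iff_dvd] at h3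
    exact_mod_cast h3
  have := mul_inv_eq_one.1 hkey
  exact Subtype.ext this

/-- A finite-order element of `GL(3,ℤ)` has order at most `6`; consequently any
subgroup of `GL(3,ℤ)` all of whose elements have finite order is finite. -/
theorem stmt3 :
    (∀ h : Matrix.GeneralLinearGroup (Fin 3) ℤ, IsOfFinOrder h → orderOf h ≤ 6) ∧
    (∀ G : Subgroup (Matrix.GeneralLinearGroup (Fin 3) ℤ),
      (∀ g ∈ G, IsOfFinOrder g) → Finite G) := by
  exact ⟨part1, part2⟩
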